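/- Let T = ⟨T, ∈ᵀ, ā⟩ be a finite structure with a distinguished l-tuple ā. Suppose: (i) ∈ᵀ is acyclic and every node has at most k elements (out-degree ≤ k as a digraph with edge x → y iff y ∈ᵀ x); (ii) every node is reachable from some a_i in at most m steps; (iii) letting U be the set of nodes reachable from some a_i in fewer than m steps or having exactly k elements, any two distinct elements of U have distinct extensions in T. Then T embeds into a model A of S_k in such a way that T equals the m-step transitive closure tcl_m^A(ā). -/

import Mathlib

/-- Levels of the transitive closure of a tuple. -/
def tcl {A : Type*} (r : A → A → Prop) {l : ℕ} (a : Fin l → A) : ℕ → Set A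
  | 0 => Set.range a
  | n + 1 => tcl r a n ∪ {v | ∃ u ∈ tcl r a n, r v u}

/-- `r` makes `A` a model of the theory `S_k`. -/
def IsSkModel {A : Type*} (r : A → A → Prop) (k : ℕ) : Prop :=
  (∀ x y : A, (∀ t, r t x ↔ r t y) → x = y) ∧
  (∀ x : A, {t | r t x}.Finite ∧ {t | r t x}.ncard ≤ k) ∧
  (∀ s : Set A, s.Finite → s.ncard ≤ k → ∃ y : A, ∀ t, r t y ↔ t ∈ s) ∧
  (∀ x : A, ¬ Relation.TransGen r x x)

open Encodable Relation
namespace SkAux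
abbrev C (T : Type) : Type := (T × ℕ) ⊕ Finset ℕ
noncomputable instance instEncC (T : Type) [Finite T] : Encodable (C T) := Encodable.ofCountable _
inductive GoodN (k : ℕ) (T : Type) [Finite T] : ℕ → Prop
  | atom (h1 : 1 ≤ k) (x : T) (n : ℕ) : GoodN k T (encode (Sum.inl (x, n) : C T))
  | set (s : Finset ℕ) (hmem : ∀ c ∈ s, GoodN k T c) (hcard : s.card ≤ k)
      (hexcl : ∀ (x : T) (n : ℕ), s ≠ {encode (Sum.inl (x, n+1) : C T)}) :
      GoodN k T (encode (Sum.inr s : C T))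
def R (T : Type) [Finite T] (t y : ℕ) : Prop :=
  match decode (α := C T) y with
  | some (Sum.inl (x, n)) => t = encode (Sum.inl (x, n+1) : C T)
  | some (Sum.inr s) => t ∈ s
  | none => False
variable {T : Type} [Finite T] {k : ℕ}
lemma R_inl {t : ℕ} {x : T} {n : ℕ} :
    R T t (encode (Sum.inl (x, n) : C T)) ↔ t = encode (Sum.inl (x, n+1) : C T) := by
  simp [R, encodek]
lemma R_inr {t : ℕ} {s : Finset ℕ} :
    R T t (encode (Sum.inr s : C T)) ↔ t ∈ s := by
  simp [R, encodek]
lemma goodN_cases {nn : ℕ} (h : GoodN k T nn) :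
    (∃ (x : T) (n : ℕ), nn = encode (Sum.inl (x, n) : C T) ∧ 1 ≤ k) ∨
    (∃ s : Finset ℕ, nn = encode (Sum.inr s : C T) ∧ (∀ c ∈ s, GoodN k T c) ∧
      s.card ≤ k ∧ ∀ (x : T) (n : ℕ), s ≠ {encode (Sum.inl (x, n+1) : C T)}) := by
  cases h with
  | atom h1 x n => exact Or.inl ⟨x, n, rfl, h1⟩
  | set s hmem hcard hexcl => exact Or.inr ⟨s, rfl, hmem, hcard, hexcl⟩
lemma goodN_inl_inv {x : T} {n : ℕ} (h : GoodN k T (encode (Sum.inl (x, n) : C T))) :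
    1 ≤ k := by
  rcases goodN_cases h with ⟨x', n', he, h1⟩ | ⟨s, he, _⟩
  · exact h1
  · exact absurd (encode_injective he) (by simp)
lemma goodN_inr_inv {s : Finset ℕ} (h : GoodN k T (encode (Sum.inr s : C T))) :
    (∀ c ∈ s, GoodN k T c) ∧ s.card ≤ k ∧
      ∀ (x : T) (n : ℕ), s ≠ {encode (Sum.inl (x, n+1) : C T)} := by
  rcases goodN_cases h with ⟨x', n', he, h1⟩ | ⟨s', he, hm, hc, hx⟩
  · exact absurd (encode_injective he) (by simp)
  · obtain rfl : s = s' := by simpa using encode_injective he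
    exact ⟨hm, hc, hx⟩
def Amod (k : ℕ) (T : Type) [Finite T] : Type := {n : ℕ // GoodN k T n}
def rA (k : ℕ) (T : Type) [Finite T] : Amod k T → Amod k T → Prop :=
  fun t y => R T t.1 y.1

------------------------------------------------------------------
-- extensionality
lemma rA_ext (x y : Amod k T) (h : ∀ t, rA k T t x ↔ rA k T t y) : x = y := by
  apply Subtype.ext
  rcases goodN_cases x.2 with ⟨x1, n1, he1, h1⟩ | ⟨s1, he1, hm1, hc1, hx1⟩ <;>
    rcases goodN_cases y.2 with ⟨x2, n2, he2, h2⟩ | ⟨s2, he2, hm2, hc2, hx2⟩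
  · -- atom / atom
    have hp : rA k T ⟨encode (Sum.inl (x1, n1+1) : C T), GoodN.atom h1 x1 (n1+1)⟩ x := by
      simp only [rA, he1, R_inl]
    have := (h _).1 hp
    simp only [rA, he2, R_inl] at this
    have h3 := encode_injective this
    simp only [Sum.inl.injEq, Prod.mk.injEq] at h3
    obtain ⟨rfl, h4⟩ := h3
    obtain rfl : n1 = n2 := by omega
    rw [he1, he2]
  · -- atom / set : impossible
    exfalso
    have hp : rA k T ⟨encode (Sum.inl (x1, n1+1) : C T), GoodN.atom h1 x1 (n1+1)⟩ x := by
      simp only [rA, he1, R_inl]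
    have hin : encode (Sum.inl (x1, n1+1) : C T) ∈ s2 := by
      have := (h _).1 hp; simpa [rA, he2, R_inr] using this
    apply hx2 x1 n1
    apply Finset.eq_singleton_iff_unique_mem.2 ⟨hin, ?_⟩
    intro c hc
    have hgc := hm2 c hc
    have hcy : rA k T ⟨c, hgc⟩ y := by simp [rA, he2, R_inr, hc]
    have := (h _).2 hcy
    simpa [rA, he1, R_inl] using this
  · -- set / atom : symmetric
    exfalso
    have hp : rA k T ⟨encode (Sum.inl (x2, n2+1) : C T), GoodN.atom h2 x2 (n2+1)⟩ y := by
      simp only [rA, he2, R_inl]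
    have hin : encode (Sum.inl (x2, n2+1) : C T) ∈ s1 := by
      have := (h _).2 hp; simpa [rA, he1, R_inr] using this
    apply hx1 x2 n2
    apply Finset.eq_singleton_iff_unique_mem.2 ⟨hin, ?_⟩
    intro c hc
    have hgc := hm1 c hc
    have hcx : rA k T ⟨c, hgc⟩ x := by simp [rA, he1, R_inr, hc]
    have := (h _).1 hcx
    simpa [rA, he2, R_inl] using this
  · -- set / set
    have hss : s1 = s2 := by
      ext c
      constructor
      · intro hc
        have hcx : rA k T ⟨c, hm1 c hc⟩ x := by simp [rA, he1, R_inr, hc]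
        have := (h _).1 hcx
        simpa [rA, he2, R_inr] using this
      · intro hc
        have hcy : rA k T ⟨c, hm2 c hc⟩ y := by simp [rA, he2, R_inr, hc]
        have := (h _).2 hcy
        simpa [rA, he1, R_inr] using this
    rw [he1, he2, hss]

-- degree
lemma rA_deg (x : Amod k T) : {t | rA k T t x}.Finite ∧ {t | rA k T t x}.ncard ≤ k := by
  rcases goodN_cases x.2 with ⟨x1, n1, he1, h1⟩ | ⟨s1, he1, hm1, hc1, hx1⟩
  · have hsub : {t | rA k T t x} ⊆ {t : Amod k T | t.1 = encode (Sum.inl (x1, n1+1) : C T)} := by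
      intro t ht; simpa [rA, he1, R_inl] using ht
    have hss : {t : Amod k T | t.1 = encode (Sum.inl (x1, n1+1) : C T)}.Subsingleton := by
      intro u hu v hv; exact Subtype.ext (hu.trans hv.symm)
    have hfin : {t | rA k T t x}.Finite := (hss.anti hsub).finite
    refine ⟨hfin, ?_⟩
    calc {t | rA k T t x}.ncard ≤ 1 :=
          (Set.ncard_le_one hfin).2 (fun a ha b hb => (hss.anti hsub) ha hb)
    _ ≤ k := h1
  · have hsub : {t | rA k T t x} ⊆ Subtype.val ⁻¹' (↑s1 : Set ℕ) := by
      intro t ht; show t.1 ∈ (↑s1 : Set ℕ); simpa [rA, he1, R_inr] using ht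
    have hfin' : (Subtype.val ⁻¹' (↑s1 : Set ℕ) : Set (Amod k T)).Finite :=
      Set.Finite.preimage (Set.injOn_of_injective Subtype.val_injective) (s1.finite_toSet)
    have hfin : {t | rA k T t x}.Finite := hfin'.subset hsub
    refine ⟨hfin, ?_⟩
    have h1 : {t | rA k T t x}.ncard ≤ (Subtype.val ⁻¹' (↑s1 : Set ℕ) : Set (Amod k T)).ncard :=
      Set.ncard_le_ncard hsub hfin'
    have h2 : (Subtype.val ⁻¹' (↑s1 : Set ℕ) : Set (Amod k T)).ncard ≤ s1.card := by
      rw [← Set.ncard_coe_finset]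
      exact (Set.ncard_image_of_injective _ Subtype.val_injective).symm.trans_le
        (Set.ncard_le_ncard (Set.image_preimage_subset _ _) s1.finite_toSet)
    exact le_trans (le_trans h1 h2) hc1


-- witness axiom
lemma rA_wit (s : Set (Amod k T)) (hfin : s.Finite) (hcard : s.ncard ≤ k) :
    ∃ y : Amod k T, ∀ t, rA k T t y ↔ t ∈ s := by
  classical
  set F : Finset (Amod k T) := hfin.toFinset with hF
  set s' : Finset ℕ := F.image (fun t => t.1) with hs'
  have hmemF : ∀ t, t ∈ F ↔ t ∈ s := fun t => hfin.mem_toFinset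
  have hmem_s' : ∀ c, c ∈ s' ↔ ∃ t ∈ s, t.1 = c := by
    intro c; simp only [hs', Finset.mem_image]
    constructor
    · rintro ⟨t, ht, rfl⟩; exact ⟨t, (hmemF t).1 ht, rfl⟩
    · rintro ⟨t, ht, rfl⟩; exact ⟨t, (hmemF t).2 ht, rfl⟩
  by_cases hc : ∃ (x : T) (n : ℕ), s' = {encode (Sum.inl (x, n+1) : C T)}
  · obtain ⟨x, n, hsing⟩ := hc
    have hne : ∃ t, t ∈ s ∧ t.1 = encode (Sum.inl (x, n+1) : C T) := by
      have : encode (Sum.inl (x, n+1) : C T) ∈ s' := by rw [hsing]; simp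
      exact (hmem_s' _).1 this
    obtain ⟨t0, ht0, ht0v⟩ := hne
    have h1 : 1 ≤ k := by
      have := t0.2; rw [ht0v] at this; exact goodN_inl_inv this
    refine ⟨⟨encode (Sum.inl (x, n) : C T), GoodN.atom h1 x n⟩, fun t => ?_⟩
    simp only [rA, R_inl]
    constructor
    · intro ht
      have : t = t0 := Subtype.ext (ht.trans ht0v.symm)
      rw [this]; exact ht0
    · intro ht
      have : t.1 ∈ s' := (hmem_s' _).2 ⟨t, ht, rfl⟩
      rw [hsing] at this; simpa using this
  · have hgood : GoodN k T (encode (Sum.inr s' : C T)) := by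
      apply GoodN.set
      · intro c hcc
        obtain ⟨t, _, rfl⟩ := (hmem_s' c).1 hcc
        exact t.2
      · calc s'.card ≤ F.card := Finset.card_image_le
          _ = s.ncard := by rw [hF, ← Set.ncard_eq_toFinset_card s hfin]
          _ ≤ k := hcard
      · push_neg at hc; exact hc
    refine ⟨⟨_, hgood⟩, fun t => ?_⟩
    simp only [rA, R_inr]
    constructor
    · intro ht
      obtain ⟨t', ht', htv⟩ := (hmem_s' _).1 ht
      rwa [← Subtype.ext htv]
    · intro ht; exact (hmem_s' _).2 ⟨t, ht, rfl⟩

-- acyclicity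
def isSetCode (t : Amod k T) : Prop := ∃ s : Finset ℕ, t.1 = encode (Sum.inr s : C T)

def rS (k : ℕ) (T : Type) [Finite T] (t y : Amod k T) : Prop :=
  rA k T t y ∧ isSetCode t

lemma acc_rS : ∀ y : Amod k T, Acc (rS k T) y := by
  rintro ⟨n, h⟩
  induction h with
  | atom h1 x n =>
    constructor
    rintro t ⟨hr, s, hs⟩
    change R T t.1 _ at hr
    simp only [R_inl] at hr
    exact absurd (encode_injective (hs.symm.trans hr)) (by simp)
  | set s hmem hcard hexcl ih =>
    constructor
    rintro t ⟨hr, _⟩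
    change R T t.1 _ at hr
    simp only [R_inr] at hr
    have := ih t.1 hr
    exact this

lemma acc_irrefl {α : Sort*} {r : α → α → Prop} {a : α} (h : Acc r a) : ¬ r a a := by
  induction h with
  | intro x _ ih => exact fun hxx => ih x hxx hxx

/-- members of atoms are atoms, with the index bumped along transitive chains -/
lemma transGen_atom {y z : Amod k T} (h : TransGen (rA k T) y z) :
    ∀ (x : T) (n : ℕ), z.1 = encode (Sum.inl (x, n) : C T) →
      ∃ j, n < j ∧ y.1 = encode (Sum.inl (x, j) : C T) := by
  induction h with
  | single hr =>
    intro x n hz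
    rename_i b
    rw [rA, hz] at hr
    rw [R_inl] at hr
    exact ⟨n+1, Nat.lt_succ_self n, hr⟩
  | tail h1 hr ih =>
    intro x n hz
    rw [rA, hz, R_inl] at hr
    obtain ⟨j, hj, hy⟩ := ih x (n+1) hr
    exact ⟨j, by omega, hy⟩

lemma transGen_set {y z : Amod k T} (h : TransGen (rA k T) y z) (hy : isSetCode y) :
    TransGen (rS k T) y z := by
  induction h with
  | single hr => exact TransGen.single ⟨hr, hy⟩
  | tail h1 hr ih =>
    rename_i b c
    have hbset : isSetCode b := by
      rcases goodN_cases b.2 with ⟨x, n, he, _⟩ | ⟨s, he, _⟩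
      · exfalso
        obtain ⟨j, hj, hyv⟩ := transGen_atom h1 x n he
        obtain ⟨s, hs⟩ := hy
        exact absurd (encode_injective (hs.symm.trans hyv)) (by simp)
      · exact ⟨s, he⟩
    exact TransGen.tail (ih) ⟨hr, hbset⟩

lemma rA_acyc (x : Amod k T) : ¬ TransGen (rA k T) x x := by
  intro h
  rcases goodN_cases x.2 with ⟨x1, n1, he, _⟩ | ⟨s, he, _⟩
  · obtain ⟨j, hj, hx⟩ := transGen_atom h x1 n1 he
    have := encode_injective (he.symm.trans hx)
    simp only [Sum.inl.injEq, Prod.mk.injEq] at this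
    omega
  · have hs : TransGen (rS k T) x x := transGen_set h ⟨s, he⟩
    exact acc_irrefl ((acc_rS x).transGen) hs

theorem isSkModel_rA : IsSkModel (rA k T) k :=
  ⟨rA_ext, rA_deg, rA_wit, rA_acyc⟩

------------------------------------------------------------------
-- the embedding

variable (rT : T → T → Prop) (U : Set T)

open Classical in
noncomputable def tagF (x : T) : Finset ℕ :=
  if x ∈ U then (∅ : Finset ℕ) else {encode (Sum.inl (x, 0) : C T)}

noncomputable def fimg (wf : WellFounded rT) : T → ℕ :=
  wf.fix fun x rec =>
    encode (Sum.inr (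
      (({t | rT t x}).toFinite.toFinset.attach.image fun t =>
        rec t.1 ((Set.Finite.mem_toFinset ({t | rT t x}).toFinite).1 t.2)) ∪ tagF U x) : C T)

noncomputable def Sx (f : T → ℕ) (x : T) : Finset ℕ :=
  ({t | rT t x}).toFinite.toFinset.image f ∪ tagF U x

lemma fimg_eq (wf : WellFounded rT) (x : T) :
    fimg rT U wf x = encode (Sum.inr (Sx rT U (fimg rT U wf) x) : C T) := by
  conv_lhs => rw [fimg, WellFounded.fix_eq]
  rw [← fimg]
  unfold Sx
  congr 2
  classical
  ext c
  simp only [Finset.mem_union, Finset.mem_image, Finset.mem_attach, true_and, Subtype.exists, exists_prop]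

lemma mem_Sx {f : T → ℕ} {c : ℕ} {x : T} :
    c ∈ Sx rT U f x ↔ (∃ t, rT t x ∧ f t = c) ∨
      (x ∉ U ∧ c = encode (Sum.inl (x, 0) : C T)) := by
  classical
  unfold Sx tagF
  by_cases hx : x ∈ U <;>
    simp [hx, Finset.mem_union, Finset.mem_image, Set.Finite.mem_toFinset, eq_comm] <;> exact or_comm


lemma fimg_ne_inl (wf : WellFounded rT) (x : T) (c : T × ℕ) :
    fimg rT U wf x ≠ encode (Sum.inl c : C T) := by
  rw [fimg_eq]
  intro h
  exact absurd (encode_injective h) (by simp)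

lemma good_fimg (wf : WellFounded rT)
    (hdeg : ∀ x : T, {t | rT t x}.ncard ≤ k)
    (hU : ∀ x : T, x ∉ U → {t | rT t x}.ncard ≠ k) :
    ∀ x, GoodN k T (fimg rT U wf x) := by
  intro x
  induction x using wf.induction with
  | _ x ih =>
  rw [fimg_eq]
  have hcard_eq : ({t | rT t x}).toFinite.toFinset.card = {t | rT t x}.ncard :=
    (Set.ncard_eq_toFinset_card _ _).symm
  apply GoodN.set
  · intro c hc
    rcases (mem_Sx rT U).1 hc with ⟨t, ht, rfl⟩ | ⟨hxU, rfl⟩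
    · exact ih t ht
    · have hlt : {t | rT t x}.ncard < k := lt_of_le_of_ne (hdeg x) (hU x hxU)
      exact GoodN.atom (by omega) x 0
  · classical
    unfold Sx tagF
    by_cases hxU : x ∈ U
    · simp only [hxU, if_pos]
      calc (({t | rT t x}).toFinite.toFinset.image (fimg rT U wf) ∪ ∅).card
          = (({t | rT t x}).toFinite.toFinset.image (fimg rT U wf)).card := by
            rw [Finset.union_empty]
        _ ≤ ({t | rT t x}).toFinite.toFinset.card := Finset.card_image_le
        _ ≤ k := by rw [hcard_eq]; exact hdeg x
    · have hlt : {t | rT t x}.ncard < k := lt_of_le_of_ne (hdeg x) (hU x hxU)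
      simp only [hxU, if_neg, not_false_iff]
      calc (({t | rT t x}).toFinite.toFinset.image (fimg rT U wf) ∪
              {encode (Sum.inl (x, 0) : C T)}).card
          ≤ (({t | rT t x}).toFinite.toFinset.image (fimg rT U wf)).card + 1 := by
            apply le_trans (Finset.card_union_le _ _); simp
        _ ≤ ({t | rT t x}).toFinite.toFinset.card + 1 :=
            Nat.add_le_add_right Finset.card_image_le 1
        _ ≤ k := by rw [hcard_eq]; omega
  · intro z n heq
    have hmem : encode (Sum.inl (z, n+1) : C T) ∈ Sx rT U (fimg rT U wf) x := by
      rw [heq]; exact Finset.mem_singleton_self _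
    rcases (mem_Sx rT U).1 hmem with ⟨t, ht, hft⟩ | ⟨hxU, hcontra⟩
    · exact fimg_ne_inl rT U wf t _ hft
    · exact absurd (encode_injective hcontra) (by simp)

lemma fimg_inj (wf : WellFounded rT)
    (hext' : ∀ u ∈ U, ∀ u' ∈ U, u ≠ u' → {t | rT t u} ≠ {t | rT t u'}) :
    Function.Injective (fimg rT U wf) := by
  have key : ∀ x y : T, fimg rT U wf x = fimg rT U wf y → x = y := by
    intro x
    induction x using wf.induction with
    | _ x ih =>
    intro y hxy
    have hS : Sx rT U (fimg rT U wf) x = Sx rT U (fimg rT U wf) y := by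
      rw [fimg_eq, fimg_eq] at hxy
      simpa using encode_injective hxy
    by_cases hxU : x ∈ U <;> by_cases hyU : y ∈ U
    · by_contra hne
      apply hext' x hxU y hyU hne
      ext t
      simp only [Set.mem_setOf_eq]
      constructor
      · intro ht
        have hmem : fimg rT U wf t ∈ Sx rT U (fimg rT U wf) y := by
          rw [← hS]; exact (mem_Sx rT U).2 (Or.inl ⟨t, ht, rfl⟩)
        rcases (mem_Sx rT U).1 hmem with ⟨t', ht', hft⟩ | ⟨_, hft⟩
        · rwa [ih t ht t' hft.symm]
        · exact absurd hft (fimg_ne_inl rT U wf t _)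
      · intro ht
        have hmem : fimg rT U wf t ∈ Sx rT U (fimg rT U wf) x := by
          rw [hS]; exact (mem_Sx rT U).2 (Or.inl ⟨t, ht, rfl⟩)
        rcases (mem_Sx rT U).1 hmem with ⟨t', ht', hft⟩ | ⟨_, hft⟩
        · rwa [← ih t' ht' t hft]
        · exact absurd hft (fimg_ne_inl rT U wf t _)
    · exfalso
      have hmem : encode (Sum.inl (y, 0) : C T) ∈ Sx rT U (fimg rT U wf) x := by
        rw [hS]; exact (mem_Sx rT U).2 (Or.inr ⟨hyU, rfl⟩)
      rcases (mem_Sx rT U).1 hmem with ⟨t, ht, hft⟩ | ⟨hxU', _⟩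
      · exact fimg_ne_inl rT U wf t _ hft
      · exact hxU' hxU
    · exfalso
      have hmem : encode (Sum.inl (x, 0) : C T) ∈ Sx rT U (fimg rT U wf) y := by
        rw [← hS]; exact (mem_Sx rT U).2 (Or.inr ⟨hxU, rfl⟩)
      rcases (mem_Sx rT U).1 hmem with ⟨t, ht, hft⟩ | ⟨hyU', _⟩
      · exact fimg_ne_inl rT U wf t _ hft
      · exact hyU' hyU
    · have hmem : encode (Sum.inl (x, 0) : C T) ∈ Sx rT U (fimg rT U wf) y := by
        rw [← hS]; exact (mem_Sx rT U).2 (Or.inr ⟨hxU, rfl⟩)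
      rcases (mem_Sx rT U).1 hmem with ⟨t, ht, hft⟩ | ⟨_, heq⟩
      · exact absurd hft (fimg_ne_inl rT U wf t _)
      · have := encode_injective heq
        simp only [Sum.inl.injEq, Prod.mk.injEq] at this
        exact this.1
  exact fun x y => key x y

end SkAux


/-- A finite structure `⟨T, ∈ᵀ, ā⟩` which is acyclic with out-degrees `≤ k`, in which
every node is reachable from the tuple in at most `m` steps, and which is extensional
with respect to the set `U` of nodes reachable in fewer than `m` steps or of
out-degree exactly `k`, embeds into a model `A ⊨ S_k` so that its image is
`tcl_m^A(ā)`. -/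
theorem tcl_structure_embeds (k m : ℕ) {T : Type} [Finite T]
    (rT : T → T → Prop) {l : ℕ} (a : Fin l → T)
    (hacyc : ∀ x : T, ¬ Relation.TransGen rT x x)
    (hdeg : ∀ x : T, {t | rT t x}.ncard ≤ k)
    (hreach : ∀ x : T, x ∈ tcl rT a m)
    (hext : ∀ u ∈ {u : T | (∃ m' < m, u ∈ tcl rT a m') ∨ {t | rT t u}.ncard = k},
            ∀ u' ∈ {u : T | (∃ m' < m, u ∈ tcl rT a m') ∨ {t | rT t u}.ncard = k},
            u ≠ u' → {t | rT t u} ≠ {t | rT t u'}) :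
    ∃ (A : Type) (rA : A → A → Prop) (f : T → A),
      IsSkModel rA k ∧ Function.Injective f ∧
      (∀ x y : T, rT x y ↔ rA (f x) (f y)) ∧
      Set.range f = tcl rA (f ∘ a) m := by
  classical
  haveI : IsTrans T (Relation.TransGen rT) := ⟨fun a b c h1 h2 => h1.trans h2⟩
  haveI : IsIrrefl T (Relation.TransGen rT) := ⟨hacyc⟩
  have wfT : WellFounded (Relation.TransGen rT) :=
    Finite.wellFounded_of_trans_of_irrefl _
  have wf : WellFounded rT :=
    Subrelation.wf (fun {x y} h => Relation.TransGen.single h) wfT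
  set U : Set T := {u | (∃ m' < m, u ∈ tcl rT a m') ∨ {t | rT t u}.ncard = k} with hUdef
  have hU : ∀ x : T, x ∉ U → {t | rT t x}.ncard ≠ k := fun x hx h => hx (Or.inr h)
  set f0 : T → ℕ := SkAux.fimg rT U wf with hf0
  have good : ∀ x, SkAux.GoodN k T (f0 x) := SkAux.good_fimg rT U wf hdeg hU
  have hinj0 : Function.Injective f0 := SkAux.fimg_inj rT U wf hext
  set fA : T → SkAux.Amod k T := fun x => ⟨f0 x, good x⟩ with hfA
  have hedge : ∀ x y : T, rT x y ↔ SkAux.rA k T (fA x) (fA y) := by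
    intro x y
    constructor
    · intro h
      show SkAux.R T (f0 x) (f0 y)
      rw [hf0, SkAux.fimg_eq rT U wf y, SkAux.R_inr]
      exact (SkAux.mem_Sx rT U).2 (Or.inl ⟨x, h, rfl⟩)
    · intro h
      have h' : f0 x ∈ SkAux.Sx rT U (SkAux.fimg rT U wf) y := by
        have := h
        rw [SkAux.rA] at this
        simp only [hfA] at this
        rw [hf0, SkAux.fimg_eq rT U wf y, SkAux.R_inr] at this
        exact this
      rcases (SkAux.mem_Sx rT U).1 h' with ⟨t, ht, hft⟩ | ⟨_, hft⟩
      · rwa [← hinj0 hft]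
      · exact absurd hft (SkAux.fimg_ne_inl rT U wf x _)
  have hmemA : ∀ (v : SkAux.Amod k T) (x : T),
      SkAux.rA k T v (fA x) ↔ v.1 ∈ SkAux.Sx rT U f0 x := by
    intro v x
    rw [SkAux.rA]
    show SkAux.R T v.1 (f0 x) ↔ _
    rw [hf0, SkAux.fimg_eq, SkAux.R_inr]
  have main : ∀ n, n ≤ m →
      tcl (SkAux.rA k T) (fA ∘ a) n = fA '' tcl rT a n := by
    intro n
    induction n with
    | zero => intro _; show Set.range (fA ∘ a) = fA '' Set.range a; rw [Set.range_comp]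
    | succ n ihn =>
      intro hnm
      have ih := ihn (by omega)
      show tcl (SkAux.rA k T) (fA ∘ a) n ∪ {v | ∃ u ∈ tcl (SkAux.rA k T) (fA ∘ a) n, SkAux.rA k T v u}
          = fA '' (tcl rT a n ∪ {v | ∃ u ∈ tcl rT a n, rT v u})
      rw [Set.image_union, ih]
      congr 1
      ext v
      simp only [Set.mem_setOf_eq, Set.mem_image]
      constructor
      · rintro ⟨u, hu, hr⟩
        obtain ⟨xu, hxu, rfl⟩ := hu
        have hv : v.1 ∈ SkAux.Sx rT U f0 xu := (hmemA v xu).1 hr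
        rcases (SkAux.mem_Sx rT U).1 hv with ⟨t, ht, hft⟩ | ⟨hxuU, hveq⟩
        · exact ⟨t, ⟨xu, hxu, ht⟩, Subtype.ext hft⟩
        · exact absurd (Or.inl ⟨n, by omega, hxu⟩) hxuU
      · rintro ⟨t, ⟨u, hu, htr⟩, rfl⟩
        refine ⟨fA u, ?_, ?_⟩
        · exact ⟨u, hu, rfl⟩
        · exact (hmemA (fA t) u).2 ((SkAux.mem_Sx rT U).2 (Or.inl ⟨t, htr, rfl⟩))
  refine ⟨SkAux.Amod k T, SkAux.rA k T, fA, SkAux.isSkModel_rA, ?_, hedge, ?_⟩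
  · intro x y h
    exact hinj0 (congrArg Subtype.val h)
  · have huniv : tcl rT a m = Set.univ := Set.eq_univ_of_forall hreach
    rw [main m le_rfl, huniv, Set.image_univ]
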